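/- Let U = B(0,1) be the open unit ball in ℝ³ and fix y ∈ U with y ≠ 0. Define, for x ∈ Ū ∖ {y}, N(x) = (1/(4π)) ( 1/|x−y| + |y| / | x|y|² − y | − log| 1 − ⟨x,y⟩ + | x|y|² − y | / |y| | ). Then: (a) N is harmonic on U ∖ {y}; and (b) for every x with |x| = 1, the radial derivative satisfies ⟨∇N(x), x⟩ = −1/(4π). -/

import Mathlib

open MeasureTheory Metric Filter Bornology
open scoped Topology RealInnerProductSpace NNReal

noncomputable section

abbrev Eucl (n : ℕ) := EuclideanSpace ℝ (Fin n)

/-- `ω_{n-1} = 2 π^{n/2} / Γ(n/2)`, the surface area of the unit sphere in `ℝⁿ`. -/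
def sphereArea (n : ℕ) : ℝ := 2 * Real.pi ^ ((n : ℝ) / 2) / Real.Gamma ((n : ℝ) / 2)

/-- `λₙ = ((n-2) ω_{n-1})⁻¹`. -/
def lam (n : ℕ) : ℝ := (((n : ℝ) - 2) * sphereArea n)⁻¹

/-- The Laplacian of `f : ℝⁿ → ℝ`. -/
def laplacian {n : ℕ} (f : Eucl n → ℝ) (x : Eucl n) : ℝ :=
  ∑ i, fderiv ℝ (fun y => fderiv ℝ f y (EuclideanSpace.single i 1)) x (EuclideanSpace.single i 1)

/-- `f` is harmonic on `s`: twice continuously differentiable there with vanishing Laplacian. -/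
def IsHarmonicOn {n : ℕ} (f : Eucl n → ℝ) (s : Set (Eucl n)) : Prop :=
  ContDiffOn ℝ 2 f s ∧ ∀ x ∈ s, laplacian f x = 0

/-- Dirichlet integral `I(f, E) = ∫_E |∇f|² dx`. -/
def dirichletI {n : ℕ} (f : Eucl n → ℝ) (E : Set (Eucl n)) : ℝ :=
  ∫ x in E, ‖gradient f x‖ ^ 2

/-- `u` is a Dirichlet potential for `(Ω; w; δ)` with constants `a`: `u` is harmonic on
`Ω ∖ {w k}`, continuous on `Ω̄ ∖ {w k}`, vanishes on `∂Ω`, and near each `w k` one has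
`u(x) = δ_k λₙ |x - w_k|^{2-n} + a_k + o(1)`. -/
def IsDirichletPotential {n : ℕ} (Ω : Set (Eucl n)) {ι : Type} (w : ι → Eucl n)
    (δ : ι → ℝ) (u : Eucl n → ℝ) (a : ι → ℝ) : Prop :=
  IsHarmonicOn u (Ω \ Set.range w) ∧ ContinuousOn u (closure Ω \ Set.range w) ∧
  (∀ x ∈ frontier Ω, u x = 0) ∧
  ∀ k, Tendsto (fun x => u x - δ k * lam n * ‖x - w k‖ ^ ((2:ℝ) - (n:ℝ)))
    (𝓝[≠] (w k)) (𝓝 (a k))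

/-- `u` is a Neumann potential for the ball `B(c,R)` with data `(w; δ)` and constants `a`:
`u` is harmonic on `B(c,R) ∖ {w k}`, continuously differentiable on the closed ball minus
`{w k}`, has vanishing radial derivative on the boundary sphere, and near each `w k` one has
`u(x) = δ_k λₙ |x - w_k|^{2-n} + a_k + o(1)`. -/
def IsNeumannPotential {n : ℕ} (c : Eucl n) (R : ℝ) {ι : Type} (w : ι → Eucl n)
    (δ : ι → ℝ) (u : Eucl n → ℝ) (a : ι → ℝ) : Prop :=
  IsHarmonicOn u (ball c R \ Set.range w) ∧
  ContDiffOn ℝ 1 u (closedBall c R \ Set.range w) ∧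
  (∀ x : Eucl n, dist x c = R → ⟪gradient u x, x - c⟫ = 0) ∧
  ∀ k, Tendsto (fun x => u x - δ k * lam n * ‖x - w k‖ ^ ((2:ℝ) - (n:ℝ)))
    (𝓝[≠] (w k)) (𝓝 (a k))

/-- `g` is the Green's function of `Ω` with pole `x₀` and harmonic radius `r`:
`g` is harmonic on `Ω ∖ {x₀}`, continuous on `Ω̄ ∖ {x₀}`, vanishes on `∂Ω` (and at infinity
if `Ω` is unbounded), and `g(x) = λₙ (|x - x₀|^{2-n} - r^{2-n}) + o(1)` as `x → x₀`. -/
def IsGreensFunction {n : ℕ} (Ω : Set (Eucl n)) (x₀ : Eucl n) (g : Eucl n → ℝ) (r : ℝ) : Prop :=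
  0 < r ∧ IsHarmonicOn g (Ω \ {x₀}) ∧ ContinuousOn g (closure Ω \ {x₀}) ∧
  (∀ x ∈ frontier Ω, g x = 0) ∧
  (¬ IsBounded Ω → Tendsto g (cobounded (Eucl n)) (𝓝 0)) ∧
  Tendsto (fun x => g x - lam n * ‖x - x₀‖ ^ ((2:ℝ) - (n:ℝ))) (𝓝[≠] x₀)
    (𝓝 (-(lam n) * r ^ ((2:ℝ) - (n:ℝ))))

namespace Neu13

theorem hasFDerivAt_sq (a x : Eucl 3) :
    HasFDerivAt (fun z : Eucl 3 => ‖z - a‖ ^ 2) ((2:ℝ) • innerSL ℝ (x - a)) x := by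
  have h := ((hasFDerivAt_id x).sub_const a).norm_sq
  refine h.congr_fderiv ?_
  ext v
  simp [two_smul]

theorem sq_ne (a x : Eucl 3) (h : x ≠ a) : (‖x - a‖ ^ 2 : ℝ) ≠ 0 :=
  pow_ne_zero _ (norm_ne_zero_iff.2 (sub_ne_zero.2 h))

theorem hasFDerivAt_rq (a x : Eucl 3) (p : ℝ) (h : x ≠ a) :
    HasFDerivAt (fun z : Eucl 3 => (‖z - a‖ ^ 2 : ℝ) ^ p)
      ((2 * p * (‖x - a‖ ^ 2 : ℝ) ^ (p - 1)) • innerSL ℝ (x - a)) x := by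
  have h1 := (Real.hasDerivAt_rpow_const (x := ‖x - a‖ ^ 2) (p := p)
    (Or.inl (sq_ne a x h))).comp_hasFDerivAt x (hasFDerivAt_sq a x)
  refine h1.congr_fderiv ?_
  ext v
  simp [ContinuousLinearMap.smul_apply]
  ring

theorem hasFDerivAt_inner_right (b v x : Eucl 3) :
    HasFDerivAt (fun z : Eucl 3 => ⟪z - b, v⟫) (innerSL ℝ v) x := by
  have h : (fun z : Eucl 3 => ⟪z - b, v⟫) = fun z => ⟪v, z⟫ - ⟪v, b⟫ := by
    funext z
    rw [real_inner_comm, inner_sub_right]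
  rw [h]
  exact ((innerSL ℝ v).hasFDerivAt).sub_const _

theorem hasFDerivAt_inner_right' (v x : Eucl 3) :
    HasFDerivAt (fun z : Eucl 3 => ⟪z, v⟫) (innerSL ℝ v) x := by
  have h : (fun z : Eucl 3 => ⟪z, v⟫) = fun z => ⟪v, z⟫ := by
    funext z; rw [real_inner_comm]
  rw [h]
  exact (innerSL ℝ v).hasFDerivAt

theorem aux_sum_inner (u w : Eucl 3) :
    ∑ i, ⟪u, EuclideanSpace.single i (1:ℝ)⟫ * ⟪w, EuclideanSpace.single i (1:ℝ)⟫ = ⟪u, w⟫ := by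
  simp [EuclideanSpace.inner_single_right, PiLp.inner_apply, RCLike.inner_apply, mul_comm]

theorem aux_sum_one :
    ∑ i : Fin 3, ⟪(EuclideanSpace.single i (1:ℝ) : Eucl 3), EuclideanSpace.single i (1:ℝ)⟫
      = 3 := by
  simp [EuclideanSpace.inner_single_right, EuclideanSpace.single_apply]

theorem rpow_facts (α : ℝ) (h : 0 < α) :
    α ^ ((-2⁻¹:ℝ)-1) = α ^ (-2⁻¹:ℝ) * α⁻¹ ∧
    α ^ ((-2⁻¹:ℝ)-1-1) = α ^ (-2⁻¹:ℝ) * α⁻¹ * α⁻¹ ∧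
    α ^ ((2⁻¹:ℝ)-1) = α ^ (-2⁻¹:ℝ) ∧
    α ^ ((2⁻¹:ℝ)-1-1) = α ^ (-2⁻¹:ℝ) * α⁻¹ ∧
    α ^ (2⁻¹:ℝ) = α * α ^ (-2⁻¹:ℝ) ∧
    α ^ (-2⁻¹:ℝ) * α ^ (-2⁻¹:ℝ) = α⁻¹ ∧ 0 < α ^ (-2⁻¹:ℝ) := by
  have h1 : α ^ ((-2⁻¹:ℝ)-1) = α ^ (-2⁻¹:ℝ) * α⁻¹ := by
    rw [Real.rpow_sub h, Real.rpow_one, div_eq_mul_inv]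
  have h2 : α ^ ((-2⁻¹:ℝ)-1-1) = α ^ (-2⁻¹:ℝ) * α⁻¹ * α⁻¹ := by
    rw [Real.rpow_sub h, Real.rpow_one, div_eq_mul_inv, h1]
  have h3 : α ^ ((2⁻¹:ℝ)-1) = α ^ (-2⁻¹:ℝ) := by norm_num
  have h4 : α ^ ((2⁻¹:ℝ)-1-1) = α ^ (-2⁻¹:ℝ) * α⁻¹ := by
    rw [Real.rpow_sub h, Real.rpow_one, div_eq_mul_inv, h3]
  have h6 : α ^ (-2⁻¹:ℝ) * α ^ (-2⁻¹:ℝ) = α⁻¹ := by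
    rw [← Real.rpow_add h, show (-2⁻¹ + -2⁻¹:ℝ) = -1 by norm_num, Real.rpow_neg_one]
  have hmul : α ^ (2⁻¹:ℝ) * α ^ (-2⁻¹:ℝ) = 1 := by
    rw [← Real.rpow_add h]; norm_num
  have hne : α ^ (-2⁻¹:ℝ) ≠ 0 := (Real.rpow_pos_of_pos h _).ne'
  have h5 : α ^ (2⁻¹:ℝ) = α * α ^ (-2⁻¹:ℝ) := by
    apply mul_left_cancel₀ hne
    rw [show α ^ (-2⁻¹:ℝ) * (α * α ^ (-2⁻¹:ℝ)) = α * (α ^ (-2⁻¹:ℝ) * α ^ (-2⁻¹:ℝ)) by ring, h6,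
      mul_inv_cancel₀ h.ne', mul_comm]
    exact hmul
  exact ⟨h1, h2, h3, h4, h5, h6, Real.rpow_pos_of_pos h _⟩

theorem scalar_lap (c m α β sA sB P F : ℝ) (hm : m ≠ 0) (hα : α ≠ 0) (hβ : β ≠ 0) (hF : F ≠ 0)
    (hsA : sA ≠ 0) (hsB : sB ≠ 0)
    (haa : α * (sA*sA) = 1) (hbb : β * (sB*sB) = 1) (hFval : F = 1 - P + m*(β*sB)) :
    c*(3*(sA*α⁻¹*α⁻¹))*α
    + c*(m⁻¹*3*(sB*β⁻¹*β⁻¹) + F⁻¹*m*(sB*β⁻¹) + (F^2)⁻¹*(m*sB)*(m*sB))*β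
    + c*(F^2)⁻¹*m^2
    + c*((F^2)⁻¹*(-2*(m*sB)))*(P-1)
    + c*(-(sA*α⁻¹) - m⁻¹*(sB*β⁻¹) - F⁻¹*m*sB)*3 = 0 := by
  have hαval : α = (sA*sA)⁻¹ := by
    field_simp
    linarith [haa]
  have hβval : β = (sB*sB)⁻¹ := by
    field_simp
    linarith [hbb]
  subst hFval
  rw [hαval, hβval]
  have h1 : (1:ℝ) - P + m * ((sB*sB)⁻¹ * sB) ≠ 0 := by
    rw [hβval] at hF; exact hF
  field_simp at h1
  have h2 : sB * (1 - P) + m ≠ 0 := by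
    intro h; apply h1; rw [show (1 - P) * sB + m = sB * (1 - P) + m by ring, h, zero_div]
  field_simp [h1]
  ring

theorem scalar_grad (c m α β sA sB P F : ℝ) (hm : 0 < m) (hsAp : 0 < sA) (hsBp : 0 < sB)
    (hα0 : α ≠ 0) (hβ0 : β ≠ 0) (hF0 : F ≠ 0)
    (haa : α*(sA*sA) = 1) (hbb : β*(sB*sB) = 1) (hαβ : m^2*β = α)
    (hαval : α = 1 - 2*P + m^2) (hFval : F = 1 - P + m*(β*sB)) :
    c * ( -(sA*α⁻¹)*(1-P) - m⁻¹*(sB*β⁻¹)*(1-(m^2)⁻¹*P)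
      - F⁻¹*(-P + m*sB*(1-(m^2)⁻¹*P)) ) = -c := by
  have hsB : sB = m * sA := by
    have hfac : (sB - m*sA) * (sB + m*sA) = 0 := by
      have h1 : β*(sB*sB) = β*((m*sA)*(m*sA)) := by
        rw [hbb]
        have : β*((m*sA)*(m*sA)) = (m^2*β)*(sA*sA) := by ring
        rw [this, hαβ, haa]
      have h2 := mul_left_cancel₀ hβ0 h1
      linear_combination h2
    rcases mul_eq_zero.1 hfac with h | h
    · linarith
    · nlinarith [mul_pos hm hsAp]
  have hβval : β = (m^2)⁻¹*α := by
    rw [← hαβ]; field_simp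
  have hFeq : F = 1 - P + α*sA := by
    rw [hFval, hβval, hsB]; field_simp
  have hQ : (1 - P + α*sA) ≠ 0 := by rw [← hFeq]; exact hF0
  rw [hsB, hβval, hFeq]
  have e12 : -(sA*α⁻¹)*(1-P) - m⁻¹*((m*sA)*((m^2)⁻¹*α)⁻¹)*(1-(m^2)⁻¹*P) = -sA := by
    field_simp
    linear_combination hαval
  have e3 : -((1 - P + α*sA)⁻¹*(-P + m*(m*sA)*(1-(m^2)⁻¹*P))) = sA - 1 := by
    field_simp
    linear_combination (-1) * haa + sA * hαval
  linear_combination c * e12 + c * e3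

def ys (y : Eucl 3) : Eucl 3 := ((‖y‖:ℝ) ^ 2)⁻¹ • y

def Ff (y z : Eucl 3) : ℝ := 1 - ⟪z, y⟫ + ‖y‖ * (‖z - ys y‖ ^ 2 : ℝ) ^ (2⁻¹:ℝ)

def gN (y z : Eucl 3) : ℝ := (1/(4*Real.pi)) *
  ((‖z - y‖ ^ 2 : ℝ) ^ (-2⁻¹:ℝ) + ‖y‖⁻¹ * (‖z - ys y‖ ^ 2 : ℝ) ^ (-2⁻¹:ℝ) - Real.log (Ff y z))

def gG (y x : Eucl 3) : Eucl 3 := (1/(4*Real.pi)) •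
  ((2 * (-2⁻¹:ℝ) * (‖x - y‖ ^ 2 : ℝ) ^ ((-2⁻¹:ℝ) - 1)) • (x - y)
   + (‖y‖⁻¹ * (2 * (-2⁻¹:ℝ)) * (‖x - ys y‖ ^ 2 : ℝ) ^ ((-2⁻¹:ℝ) - 1)) • (x - ys y)
   - (Ff y x)⁻¹ • ((-1:ℝ) • y
       + (‖y‖ * (2 * (2⁻¹:ℝ) * (‖x - ys y‖ ^ 2 : ℝ) ^ ((2⁻¹:ℝ) - 1))) • (x - ys y)))

def psi (y v z : Eucl 3) : ℝ := (1/(4*Real.pi)) *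
  ((2 * (-2⁻¹:ℝ) * (‖z - y‖ ^ 2 : ℝ) ^ ((-2⁻¹:ℝ) - 1)) * ⟪z - y, v⟫
   + (‖y‖⁻¹ * (2 * (-2⁻¹:ℝ)) * ((‖z - ys y‖ ^ 2 : ℝ) ^ ((-2⁻¹:ℝ) - 1) * ⟪z - ys y, v⟫))
   - (Ff y z)⁻¹ * ((-1:ℝ) * ⟪y, v⟫
       + (‖y‖ * (2 * (2⁻¹:ℝ) * (‖z - ys y‖ ^ 2 : ℝ) ^ ((2⁻¹:ℝ) - 1))) * ⟪z - ys y, v⟫))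

theorem hasFDerivAt_Ff (y x : Eucl 3) (hxs : x ≠ ys y) :
    HasFDerivAt (Ff y)
      ((-1:ℝ) • innerSL ℝ y
        + (‖y‖ * (2 * (2⁻¹:ℝ) * (‖x - ys y‖ ^ 2 : ℝ) ^ ((2⁻¹:ℝ) - 1))) • innerSL ℝ (x - ys y))
      x := by
  have h1 : HasFDerivAt (fun z : Eucl 3 => 1 - ⟪z, y⟫) ((-1:ℝ) • innerSL ℝ y) x := by
    have := (hasFDerivAt_const (1:ℝ) x).sub (hasFDerivAt_inner_right' y x)
    refine this.congr_fderiv ?_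
    ext v; simp
  have h2 := (hasFDerivAt_rq (ys y) x (2⁻¹:ℝ) hxs).const_mul (‖y‖ : ℝ)
  have h3 := h1.add h2
  refine h3.congr_fderiv ?_
  ext v
  simp [ContinuousLinearMap.smul_apply]
  ring

theorem hasGradientAt_gN (y x : Eucl 3) (hxy : x ≠ y) (hxs : x ≠ ys y) (hF : Ff y x ≠ 0) :
    HasGradientAt (gN y) (gG y x) x := by
  have h1 := hasFDerivAt_rq y x (-2⁻¹:ℝ) hxy
  have h2 := (hasFDerivAt_rq (ys y) x (-2⁻¹:ℝ) hxs).const_mul (‖y‖⁻¹ : ℝ)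
  have hlog := (Real.hasDerivAt_log hF).comp_hasFDerivAt x (hasFDerivAt_Ff y x hxs)
  have htot := ((h1.add h2).sub hlog).const_mul (1/(4*Real.pi) : ℝ)
  rw [hasGradientAt_iff_hasFDerivAt]
  refine htot.congr_fderiv ?_
  ext v
  simp [gG, inner_add_left, inner_sub_left, real_inner_smul_left, inner_neg_left,
    ContinuousLinearMap.smul_apply, InnerProductSpace.toDual_apply_apply, smul_smul]

theorem hasFDerivAt_psi (y x v : Eucl 3) (hxy : x ≠ y) (hxs : x ≠ ys y) (hF : Ff y x ≠ 0) :
    ∃ D : Eucl 3 →L[ℝ] ℝ, HasFDerivAt (psi y v) D x ∧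
      D v = (1/(4*Real.pi)) *
        (3 * (‖x - y‖ ^ 2 : ℝ) ^ ((-2⁻¹:ℝ)-1-1) * (⟪x-y,v⟫*⟪x-y,v⟫)
          - (‖x - y‖ ^ 2 : ℝ) ^ ((-2⁻¹:ℝ)-1) * ⟪v,v⟫
        + ‖y‖⁻¹ * (3 * (‖x - ys y‖ ^ 2 : ℝ) ^ ((-2⁻¹:ℝ)-1-1) * (⟪x - ys y,v⟫*⟪x - ys y,v⟫)
            - (‖x - ys y‖ ^ 2 : ℝ) ^ ((-2⁻¹:ℝ)-1) * ⟪v,v⟫)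
        - (Ff y x)⁻¹ * (‖y‖ * (‖x - ys y‖ ^ 2 : ℝ) ^ ((2⁻¹:ℝ)-1) * ⟪v,v⟫
            - ‖y‖ * (‖x - ys y‖ ^ 2 : ℝ) ^ ((2⁻¹:ℝ)-1-1) * (⟪x - ys y,v⟫*⟪x - ys y,v⟫))
        + ((Ff y x)^2)⁻¹ *
            ((-⟪y,v⟫ + ‖y‖ * (‖x - ys y‖ ^ 2 : ℝ) ^ ((2⁻¹:ℝ)-1) * ⟪x - ys y,v⟫)
              * (-⟪y,v⟫ + ‖y‖ * (‖x - ys y‖ ^ 2 : ℝ) ^ ((2⁻¹:ℝ)-1) * ⟪x - ys y,v⟫))) := by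
  have t1 := ((hasFDerivAt_rq y x ((-2⁻¹:ℝ) - 1) hxy).const_mul (2 * (-2⁻¹:ℝ))).mul
    (hasFDerivAt_inner_right y v x)
  have t2 := (((hasFDerivAt_rq (ys y) x ((-2⁻¹:ℝ) - 1) hxs).mul
    (hasFDerivAt_inner_right (ys y) v x)).const_mul (‖y‖⁻¹ * (2 * (-2⁻¹:ℝ))))
  have c3 := ((hasFDerivAt_rq (ys y) x ((2⁻¹:ℝ) - 1) hxs).const_mul
    (2 * (2⁻¹:ℝ))).const_mul (‖y‖)
  have hb := (hasFDerivAt_const ((-1:ℝ) * ⟪y, v⟫) x).add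
    (c3.mul (hasFDerivAt_inner_right (ys y) v x))
  have hinv := (hasDerivAt_inv hF).comp_hasFDerivAt x (hasFDerivAt_Ff y x hxs)
  have t3 := hinv.mul hb
  have htot := ((t1.add t2).sub t3).const_mul (1/(4*Real.pi) : ℝ)
  refine ⟨_, htot, ?_⟩
  simp only [ContinuousLinearMap.add_apply, ContinuousLinearMap.sub_apply,
    ContinuousLinearMap.smul_apply, innerSL_apply_apply, smul_eq_mul, ContinuousLinearMap.zero_apply,
    Function.comp_apply, Pi.add_apply, Pi.mul_apply]
  ring

set_option maxHeartbeats 1000000 in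
theorem lap_sum (y x : Eucl 3) (hy0 : y ≠ 0) (hxy : x ≠ y) (hxs : x ≠ ys y)
    (hFpos : 0 < Ff y x) :
    ∑ i : Fin 3, fderiv ℝ (psi y (EuclideanSpace.single i 1)) x (EuclideanSpace.single i 1)
      = 0 := by
  set m := ‖y‖ with hm
  have hmpos : 0 < m := norm_pos_iff.2 hy0
  set α := (‖x - y‖ ^ 2 : ℝ) with hα
  set β := (‖x - ys y‖ ^ 2 : ℝ) with hβ
  have hαpos : 0 < α := pow_pos (norm_pos_iff.2 (sub_ne_zero.2 hxy)) 2
  have hβpos : 0 < β := pow_pos (norm_pos_iff.2 (sub_ne_zero.2 hxs)) 2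
  obtain ⟨a1, a2, a3, a4, a5, a6, a7⟩ := rpow_facts α hαpos
  obtain ⟨b1, b2, b3, b4, b5, b6, b7⟩ := rpow_facts β hβpos
  set c := (1/(4*Real.pi) : ℝ) with hc
  set F := Ff y x with hFdef
  set u := x - y with hu
  set w := x - ys y with hw
  set K1 := c * (3 * α^((-2⁻¹:ℝ)-1-1)) with hK1
  set K2 := c * (m⁻¹*3*β^((-2⁻¹:ℝ)-1-1) + F⁻¹*m*β^((2⁻¹:ℝ)-1-1)
    + (F^2)⁻¹*(m*β^((2⁻¹:ℝ)-1))*(m*β^((2⁻¹:ℝ)-1))) with hK2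
  set K3 := c * (F^2)⁻¹ with hK3
  set K4 := c * ((F^2)⁻¹*(-2*(m*β^((2⁻¹:ℝ)-1)))) with hK4
  set K5 := c * (-(α^((-2⁻¹:ℝ)-1)) - m⁻¹*β^((-2⁻¹:ℝ)-1) - F⁻¹*m*β^((2⁻¹:ℝ)-1)) with hK5
  have hterm : ∀ i : Fin 3, fderiv ℝ (psi y (EuclideanSpace.single i 1)) x
      (EuclideanSpace.single i 1)
      = K1 * (⟪u, EuclideanSpace.single i (1:ℝ)⟫ * ⟪u, EuclideanSpace.single i (1:ℝ)⟫)
      + K2 * (⟪w, EuclideanSpace.single i (1:ℝ)⟫ * ⟪w, EuclideanSpace.single i (1:ℝ)⟫)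
      + K3 * (⟪y, EuclideanSpace.single i (1:ℝ)⟫ * ⟪y, EuclideanSpace.single i (1:ℝ)⟫)
      + K4 * (⟪y, EuclideanSpace.single i (1:ℝ)⟫ * ⟪w, EuclideanSpace.single i (1:ℝ)⟫)
      + K5 * ⟪(EuclideanSpace.single i (1:ℝ) : Eucl 3), EuclideanSpace.single i (1:ℝ)⟫ := by
    intro i
    obtain ⟨D, hD, hDv⟩ := hasFDerivAt_psi y x (EuclideanSpace.single i 1) hxy hxs hFpos.ne'
    rw [hD.fderiv, hDv, hK1, hK2, hK3, hK4, hK5]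
    ring
  have hsum : ∑ i : Fin 3, fderiv ℝ (psi y (EuclideanSpace.single i 1)) x
      (EuclideanSpace.single i 1) = K1 * ⟪u,u⟫ + K2 * ⟪w,w⟫ + K3 * ⟪y,y⟫ + K4 * ⟪y,w⟫
      + K5 * 3 := by
    simp_rw [hterm, Finset.sum_add_distrib, ← Finset.mul_sum, aux_sum_inner, aux_sum_one]
  rw [hsum]
  have huu : ⟪u,u⟫ = α := real_inner_self_eq_norm_sq u
  have hww : ⟪w,w⟫ = β := real_inner_self_eq_norm_sq w
  have hyy : ⟪y,y⟫ = m^2 := real_inner_self_eq_norm_sq y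
  have hyw : ⟪y,w⟫ = ⟪x,y⟫ - 1 := by
    rw [hw, inner_sub_right, ys, real_inner_smul_right, real_inner_self_eq_norm_sq,
      real_inner_comm]
    rw [show ((‖y‖:ℝ)^2)⁻¹ * ‖y‖^2 = 1 from inv_mul_cancel₀ (by positivity)]
  have hFval : F = 1 - ⟪x,y⟫ + m * (β * β^(-2⁻¹:ℝ)) := by rw [← b5]; rfl
  have hbb : β * (β^(-2⁻¹:ℝ) * β^(-2⁻¹:ℝ)) = 1 := by
    rw [b6]; exact mul_inv_cancel₀ hβpos.ne'
  rw [huu, hww, hyy, hyw, hK1, hK2, hK3, hK4, hK5, a1, a2, b1, b2, b3, b4]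
  set P := (⟪x,y⟫ : ℝ) with hP
  set sA := α ^ (-2⁻¹:ℝ) with hsA
  set sB := β ^ (-2⁻¹:ℝ) with hsB
  have haa : α * (sA * sA) = 1 := by
    rw [hsA, a6]; exact mul_inv_cancel₀ hαpos.ne'
  have hF0 : F ≠ 0 := hFpos.ne'
  have hsA0 : sA ≠ 0 := a7.ne'
  have hsB0 : sB ≠ 0 := b7.ne'
  clear_value sA sB P F m α β
  linear_combination scalar_lap c m α β sA sB P F hmpos.ne' hαpos.ne' hβpos.ne' hF0 hsA0 hsB0
    haa hbb hFval

theorem gG_inner (y x v : Eucl 3) : ⟪gG y x, v⟫ = psi y v x := by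
  simp only [gG, psi, inner_add_left, inner_sub_left, real_inner_smul_left, inner_neg_left]
  ring

theorem laplacian_zero (y : Eucl 3) (hy0 : y ≠ 0) (f : Eucl 3 → ℝ) (x : Eucl 3)
    (hfe : ∀ᶠ z in 𝓝 x, f z = gN y z)
    (hev : ∀ᶠ z in 𝓝 x, z ≠ y ∧ z ≠ ys y ∧ 0 < Ff y z)
    (hxy : x ≠ y) (hxs : x ≠ ys y) (hFpos : 0 < Ff y x) :
    laplacian f x = 0 := by
  have key : ∀ i : Fin 3, (fun z => fderiv ℝ f z (EuclideanSpace.single i 1)) =ᶠ[𝓝 x]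
      (fun z => psi y (EuclideanSpace.single i 1) z) := by
    intro i
    have hfe' : ∀ᶠ z in 𝓝 x, ∀ᶠ w in 𝓝 z, f w = gN y w := eventually_eventually_nhds.2 hfe
    filter_upwards [hfe', hev] with z hz hz'
    have hgz := (hasGradientAt_gN y z hz'.1 hz'.2.1 hz'.2.2.ne').hasFDerivAt
    have hfd : HasFDerivAt f (InnerProductSpace.toDual ℝ (Eucl 3) (gG y z)) z :=
      hgz.congr_of_eventuallyEq hz
    rw [hfd.fderiv]
    have : InnerProductSpace.toDual ℝ (Eucl 3) (gG y z) (EuclideanSpace.single i 1)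
        = ⟪gG y z, EuclideanSpace.single i 1⟫ := InnerProductSpace.toDual_apply_apply
    rw [this, gG_inner]
  have h2 : ∀ i : Fin 3, fderiv ℝ (fun z => fderiv ℝ f z (EuclideanSpace.single i 1)) x
      (EuclideanSpace.single i 1)
      = fderiv ℝ (psi y (EuclideanSpace.single i 1)) x (EuclideanSpace.single i 1) := by
    intro i
    rw [(key i).fderiv_eq]
  calc laplacian f x
      = ∑ i : Fin 3, fderiv ℝ (psi y (EuclideanSpace.single i 1)) x
          (EuclideanSpace.single i 1) := Finset.sum_congr rfl fun i _ => h2 i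
    _ = 0 := lap_sum y x hy0 hxy hxs hFpos

theorem contDiffAt_gN (y x : Eucl 3) (hxy : x ≠ y) (hxs : x ≠ ys y) (hF : Ff y x ≠ 0) :
    ContDiffAt ℝ 2 (gN y) x := by
  have hB : ContDiffAt ℝ 2 (fun z : Eucl 3 => (‖z - ys y‖ ^ 2 : ℝ)) x :=
    (((contDiff_id (E := Eucl 3)).sub contDiff_const).norm_sq ℝ).contDiffAt
  have h1 : ContDiffAt ℝ 2 (fun z : Eucl 3 => (‖z - y‖ ^ 2 : ℝ) ^ (-2⁻¹:ℝ)) x :=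
    ((((contDiff_id (E := Eucl 3)).sub contDiff_const).norm_sq ℝ).contDiffAt).rpow_const_of_ne
      (sq_ne y x hxy)
  have h2 : ContDiffAt ℝ 2 (fun z : Eucl 3 => (‖z - ys y‖ ^ 2 : ℝ) ^ (-2⁻¹:ℝ)) x :=
    hB.rpow_const_of_ne (sq_ne (ys y) x hxs)
  have hFc : ContDiffAt ℝ 2 (Ff y) x := by
    have hinner : ContDiffAt ℝ 2 (fun z : Eucl 3 => ⟪z, y⟫) x :=
      ((contDiff_id (E := Eucl 3)).inner ℝ contDiff_const).contDiffAt
    exact (contDiffAt_const.sub hinner).add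
      ((hB.rpow_const_of_ne (sq_ne (ys y) x hxs)).const_smul (‖y‖ : ℝ))
  have hlog : ContDiffAt ℝ 2 (fun z => Real.log (Ff y z)) x := hFc.log hF
  exact ((h1.add (h2.const_smul (‖y‖⁻¹:ℝ))).sub hlog).const_smul ((1/(4*Real.pi)) : ℝ)

theorem rpow_norm_neg (w : Eucl 3) (h : w ≠ 0) : (‖w‖ ^ 2 : ℝ) ^ (-2⁻¹:ℝ) = 1 / ‖w‖ := by
  have h0 : (0:ℝ) < ‖w‖ := norm_pos_iff.2 h
  rw [show (‖w‖ ^ 2 : ℝ) = ‖w‖ ^ ((2:ℕ):ℝ) from (Real.rpow_natCast _ 2).symm,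
    ← Real.rpow_mul (le_of_lt h0)]
  norm_num
  exact (Real.rpow_neg_one _).trans (by rw [inv_eq_one_div])

theorem rpow_norm_pos (w : Eucl 3) (h : w ≠ 0) : (‖w‖ ^ 2 : ℝ) ^ ((2⁻¹:ℝ)) = ‖w‖ := by
  have h0 : (0:ℝ) < ‖w‖ := norm_pos_iff.2 h
  rw [show (‖w‖ ^ 2 : ℝ) = ‖w‖ ^ ((2:ℕ):ℝ) from (Real.rpow_natCast _ 2).symm,
    ← Real.rpow_mul (le_of_lt h0)]
  norm_num

theorem Ff_pos (y z : Eucl 3) (hP : ⟪z, y⟫ < 1) : 0 < Ff y z := by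
  have h2 : (0:ℝ) ≤ ‖y‖ * (‖z - ys y‖ ^ 2 : ℝ) ^ ((2⁻¹:ℝ)) :=
    mul_nonneg (norm_nonneg _) (Real.rpow_nonneg (by positivity) _)
  have h1 : (0:ℝ) < 1 - ⟪z, y⟫ := by linarith
  rw [Ff]; linarith

theorem norm_smul_sub (y z : Eucl 3) (hy0 : y ≠ 0) :
    ‖(‖y‖ ^ 2 : ℝ) • z - y‖ = ‖y‖ ^ 2 * ‖z - ys y‖ := by
  have h : (‖y‖ ^ 2 : ℝ) • z - y = (‖y‖ ^ 2 : ℝ) • (z - ys y) := by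
    rw [smul_sub, ys, smul_smul, mul_inv_cancel₀ (pow_ne_zero 2 (norm_ne_zero_iff.2 hy0)),
      one_smul]
  rw [h, norm_smul, Real.norm_eq_abs, abs_of_nonneg (by positivity)]

theorem formula_eq (y z : Eucl 3) (hy0 : y ≠ 0) (hzy : z ≠ y) (hzs : z ≠ ys y)
    (hP : ⟪z, y⟫ < 1) :
    (1 / (4 * Real.pi)) * (1 / ‖z - y‖ + ‖y‖ / ‖(‖y‖ ^ 2 : ℝ) • z - y‖
      - Real.log |1 - ⟪z, y⟫ + ‖(‖y‖ ^ 2 : ℝ) • z - y‖ / ‖y‖|) = gN y z := by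
  have hyn : (0:ℝ) < ‖y‖ := norm_pos_iff.2 hy0
  have hzn : (0:ℝ) < ‖z - ys y‖ := norm_pos_iff.2 (sub_ne_zero.2 hzs)
  have harg : 1 - ⟪z, y⟫ + ‖(‖y‖ ^ 2 : ℝ) • z - y‖ / ‖y‖ = Ff y z := by
    rw [norm_smul_sub y z hy0, Ff, rpow_norm_pos _ (sub_ne_zero.2 hzs)]
    field_simp
  rw [harg, abs_of_pos (Ff_pos y z hP), gN, rpow_norm_neg _ (sub_ne_zero.2 hzy),
    rpow_norm_neg _ (sub_ne_zero.2 hzs), norm_smul_sub y z hy0]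
  have : ‖y‖ / (‖y‖ ^ 2 * ‖z - ys y‖) = ‖y‖⁻¹ * (1 / ‖z - ys y‖) := by
    field_simp
  rw [this]

end Neu13

/-- the Neumann function of the unit ball in `ℝ³` (Sadybekov et al.). -/
theorem neumann_function_unit_ball_R3 (y : Eucl 3) (hy : y ∈ ball (0 : Eucl 3) 1)
    (hy0 : y ≠ 0) (N : Eucl 3 → ℝ)
    (hN : ∀ x : Eucl 3, N x = (1 / (4 * Real.pi)) *
      (1 / ‖x - y‖ + ‖y‖ / ‖(‖y‖ ^ 2 : ℝ) • x - y‖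
        - Real.log |1 - ⟪x, y⟫ + ‖(‖y‖ ^ 2 : ℝ) • x - y‖ / ‖y‖|)) :
    IsHarmonicOn N (ball (0 : Eucl 3) 1 \ {y}) ∧
      ∀ x : Eucl 3, ‖x‖ = 1 → ⟪gradient N x, x⟫ = -(1 / (4 * Real.pi)) := by
  have hyn : (0:ℝ) < ‖y‖ := norm_pos_iff.2 hy0
  have hylt : ‖y‖ < 1 := mem_ball_zero_iff.1 hy
  set W : Set (Eucl 3) := ({z | ⟪z, y⟫ < 1} ∩ {z | ‖z‖ < ‖y‖⁻¹}) ∩ {y}ᶜ with hW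
  have hWopen : IsOpen W := by
    refine IsOpen.inter (IsOpen.inter ?_ ?_) isOpen_compl_singleton
    · exact isOpen_lt (Continuous.inner continuous_id continuous_const) continuous_const
    · exact isOpen_lt continuous_norm continuous_const
  have hysnorm : ‖Neu13.ys y‖ = ‖y‖⁻¹ := by
    rw [Neu13.ys, norm_smul, Real.norm_eq_abs, abs_of_nonneg (by positivity)]
    field_simp
  have hmemW : ∀ z ∈ W, z ≠ y ∧ z ≠ Neu13.ys y ∧ 0 < Neu13.Ff y z ∧ ⟪z,y⟫ < 1 := by
    rintro z ⟨⟨h1, h2⟩, h3⟩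
    refine ⟨h3, ?_, Neu13.Ff_pos y z h1, h1⟩
    intro h
    simp only [Set.mem_setOf_eq] at h2
    rw [h, hysnorm] at h2
    exact lt_irrefl _ h2
  have hNW : ∀ z ∈ W, N z = Neu13.gN y z := by
    intro z hz
    obtain ⟨hz1, hz2, hz3, hz4⟩ := hmemW z hz
    rw [hN z]
    exact Neu13.formula_eq y z hy0 hz1 hz2 hz4
  have hball : ball (0:Eucl 3) 1 \ {y} ⊆ W := by
    rintro z ⟨hz1, hz2⟩
    have hzn : ‖z‖ < 1 := mem_ball_zero_iff.1 hz1
    have h1lt : (1:ℝ) < ‖y‖⁻¹ := (one_lt_inv₀ hyn).2 hylt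
    refine ⟨⟨?_, lt_trans hzn h1lt⟩, hz2⟩
    calc ⟪z,y⟫ ≤ ‖z‖*‖y‖ := real_inner_le_norm z y
      _ < 1 := by nlinarith [norm_nonneg z]
  have hsphere : ∀ x : Eucl 3, ‖x‖ = 1 → x ∈ W := by
    intro x hx
    refine ⟨⟨?_, by rw [Set.mem_setOf_eq, hx]; exact (one_lt_inv₀ hyn).2 hylt⟩, ?_⟩
    · rw [Set.mem_setOf_eq]
      calc ⟪x,y⟫ ≤ ‖x‖*‖y‖ := real_inner_le_norm x y
        _ < 1 := by rw [hx, one_mul]; exact hylt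
    · intro h
      rw [Set.mem_singleton_iff] at h
      rw [h] at hx
      rw [hx] at hylt
      exact lt_irrefl _ hylt
  have heqf : ∀ z ∈ W, N =ᶠ[𝓝 z] Neu13.gN y := by
    intro z hz
    exact Filter.eventuallyEq_of_mem (hWopen.mem_nhds hz) hNW
  constructor
  · constructor
    · intro z hz
      have hzW := hball hz
      obtain ⟨hz1, hz2, hz3, _⟩ := hmemW z hzW
      exact ((Neu13.contDiffAt_gN y z hz1 hz2 hz3.ne').congr_of_eventuallyEq
        (heqf z hzW)).contDiffWithinAt
    · intro z hz
      have hzW := hball hz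
      obtain ⟨hz1, hz2, hz3, _⟩ := hmemW z hzW
      have hev : ∀ᶠ w in 𝓝 z, w ≠ y ∧ w ≠ Neu13.ys y ∧ 0 < Neu13.Ff y w := by
        filter_upwards [hWopen.mem_nhds hzW] with w hw
        obtain ⟨h1, h2, h3, _⟩ := hmemW w hw
        exact ⟨h1, h2, h3⟩
      exact Neu13.laplacian_zero y hy0 N z (heqf z hzW) hev hz1 hz2 hz3
  · intro x hx
    have hxW := hsphere x hx
    obtain ⟨hx1, hx2, hx3, hx4⟩ := hmemW x hxW
    have hgrad : HasGradientAt N (Neu13.gG y x) x := by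
      rw [hasGradientAt_iff_hasFDerivAt]
      exact ((Neu13.hasGradientAt_gN y x hx1 hx2 hx3.ne').hasFDerivAt).congr_of_eventuallyEq
        (heqf x hxW)
    rw [hgrad.gradient, Neu13.gG_inner]
    simp only [Neu13.psi]
    rw [real_inner_comm x y]
    set m := ‖y‖ with hm
    set α := (‖x - y‖ ^ 2 : ℝ) with hα
    set β := (‖x - Neu13.ys y‖ ^ 2 : ℝ) with hβ
    have hαpos : 0 < α := pow_pos (norm_pos_iff.2 (sub_ne_zero.2 hx1)) 2
    have hβpos : 0 < β := pow_pos (norm_pos_iff.2 (sub_ne_zero.2 hx2)) 2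
    obtain ⟨a1, a2, a3, a4, a5, a6, a7⟩ := Neu13.rpow_facts α hαpos
    obtain ⟨b1, b2, b3, b4, b5, b6, b7⟩ := Neu13.rpow_facts β hβpos
    have hxx : ⟪x - y, x⟫ = 1 - ⟪x,y⟫ := by
      rw [inner_sub_left, real_inner_self_eq_norm_sq, hx, real_inner_comm]
      norm_num
    have hxs' : ⟪x - Neu13.ys y, x⟫ = 1 - (m^2)⁻¹ * ⟪x,y⟫ := by
      rw [inner_sub_left, real_inner_self_eq_norm_sq, hx, Neu13.ys, real_inner_smul_left,
        real_inner_comm]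
      norm_num
      exact Or.inl rfl
    have e1 : α = 1 - 2*⟪x,y⟫ + m^2 := by
      rw [hα, norm_sub_sq_real, hx]
      norm_num
      rfl
    have e2 : β = 1 - 2*((m^2)⁻¹*⟪x,y⟫) + (m⁻¹)^2 := by
      rw [hβ, norm_sub_sq_real, hx, hysnorm]
      rw [show ⟪x, Neu13.ys y⟫ = (m^2)⁻¹ * ⟪x,y⟫ by
        rw [Neu13.ys, real_inner_smul_right]]
      norm_num
    have hαβ : m^2*β = α := by
      rw [e2, e1]
      field_simp
      ring
    have hFval : Neu13.Ff y x = 1 - ⟪x,y⟫ + m * (β * β^(-2⁻¹:ℝ)) := by rw [← b5]; rfl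
    rw [hxx, hxs', a1, b1, b3]
    set P := (⟪x,y⟫ : ℝ) with hP
    set sA := α ^ (-2⁻¹:ℝ) with hsA
    set sB := β ^ (-2⁻¹:ℝ) with hsB
    have haa : α * (sA * sA) = 1 := by
      rw [hsA, a6]; exact mul_inv_cancel₀ hαpos.ne'
    have hbb : β * (sB * sB) = 1 := by
      rw [hsB, b6]; exact mul_inv_cancel₀ hβpos.ne'
    clear_value sA sB P
    linear_combination Neu13.scalar_grad (1/(4*Real.pi)) m α β sA sB P (Neu13.Ff y x)
      hyn a7 b7 hαpos.ne' hβpos.ne' hx3.ne' haa hbb hαβ e1 hFval
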